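/- arXiv:1301.2647 — 2 statements merged into one kernel-verified Lean document; each statement's English description precedes it below -/
import Mathlib

section
/- (Witt formula) For each n ≥ 1, the identity 1 - n·q = ∏_{k=1}^∞ (1-q^k)^{ℓ_n(k)} holds in ℤ[[q]], where ℓ_n(k) = (1/k) ∑_{d | k} μ(d) n^{k/d} is the necklace (Witt) number. -/
open PowerSeries Finset

/-- The power series `1 - q^(k+1)`, as a unit of `ℤ⟦X⟧`. -/
noncomputable def oneSubX (k : ℕ) : (PowerSeries ℤ)ˣ :=
  ((PowerSeries.isUnit_iff_constantCoeff (φ := 1 - X ^ (k + 1))).mpr (by simp)).unit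

/-- `f = ∏_{k=1}^∞ (1 - q^k)^(i k)` in `ℤ⟦X⟧`, interpreted q-adically: modulo `q^N`, `f`
agrees with the finite product of the factors `(1 - q^k)^(i k)` for `1 ≤ k ≤ N`. -/
def HasProdExpansion (f : PowerSeries ℤ) (i : ℕ → ℤ) : Prop :=
  ∀ N : ℕ, trunc N f =
    trunc N ((∏ k ∈ range N, oneSubX k ^ i (k + 1) : (PowerSeries ℤ)ˣ) : PowerSeries ℤ)

/-- The necklace (Witt) number `ℓ_n(k) = (1/k) ∑_{d ∣ k} μ(d) n^(k/d)`
(the division is exact; see the divisibility statement). -/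
def necklace (n k : ℕ) : ℤ :=
  (∑ d ∈ Nat.divisors k, (ArithmeticFunction.moebius d : ℤ) * (n : ℤ) ^ (k / d)) / k

section NumberTheory

open ArithmeticFunction ArithmeticFunction.Moebius

lemma fermat_int {p : ℕ} (hp : p.Prime) (x : ℤ) : (p : ℤ) ∣ x ^ p - x := by
  haveI : Fact p.Prime := ⟨hp⟩
  have h : ((x ^ p - x : ℤ) : ZMod p) = 0 := by
    push_cast; rw [ZMod.pow_card]; ring
  exact (ZMod.intCast_zmod_eq_zero_iff_dvd _ p).mp h

lemma pow_cong {p : ℕ} (hp : p.Prime) (a c : ℕ) (x : ℤ) :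
    ((p : ℤ)) ^ (a + 1) ∣ x ^ (p ^ (a + 1) * c) - x ^ (p ^ a * c) := by
  have h := dvd_sub_pow_of_dvd_sub (R := ℤ) (p := p) (a := (x ^ c) ^ p) (b := x ^ c)
    (fermat_int hp (x ^ c)) a
  push_cast at h
  convert h using 2
  · rfl
  · rw [← pow_mul, ← pow_mul]; ring_nf
  · rw [← pow_mul]; ring_nf

/-- The Möbius sum. -/
noncomputable def mSum (x : ℤ) (m : ℕ) : ℤ := ∑ d ∈ m.divisors, (μ d : ℤ) * x ^ (m / d)

lemma prime_pow_dvd_mSum {p a t : ℕ} (hp : p.Prime) (ht : ¬ p ∣ t) (ht0 : t ≠ 0) (x : ℤ) :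
    ((p : ℤ)) ^ (a + 1) ∣ mSum x (p ^ (a + 1) * t) := by
  set m := p ^ (a + 1) * t with hm
  have hm0 : m ≠ 0 := Nat.mul_ne_zero (pow_ne_zero _ hp.pos.ne') ht0
  have hp0 : p ≠ 0 := hp.pos.ne'
  set A : Finset ℕ := t.divisors ∪ t.divisors.image (p * ·) with hA
  have hdisj : Disjoint t.divisors (t.divisors.image (p * ·)) := by
    rw [Finset.disjoint_left]
    rintro d hd hd'
    obtain ⟨e, he, rfl⟩ := Finset.mem_image.mp hd'
    exact ht (dvd_trans ⟨e, rfl⟩ (Nat.mem_divisors.mp hd).1)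
  have hsub : A ⊆ m.divisors := by
    intro d hd
    rcases Finset.mem_union.mp hd with h | h
    · exact Nat.mem_divisors.mpr ⟨(Nat.mem_divisors.mp h).1.mul_left _, hm0⟩
    · obtain ⟨e, he, rfl⟩ := Finset.mem_image.mp h
      refine Nat.mem_divisors.mpr ⟨?_, hm0⟩
      have : e ∣ t := (Nat.mem_divisors.mp he).1
      calc p * e ∣ p * t := mul_dvd_mul_left p this
        _ ∣ m := by rw [hm]; exact mul_dvd_mul_right (dvd_pow_self p (Nat.succ_ne_zero a)) t
  have hzero : ∀ d ∈ m.divisors, d ∉ A → (μ d : ℤ) * x ^ (m / d) = 0 := by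
    intro d hd hdA
    have hdvd : d ∣ m := (Nat.mem_divisors.mp hd).1
    have hpp : p * p ∣ d := by
      by_contra hppd
      apply hdA
      by_cases hpd : p ∣ d
      · obtain ⟨e, rfl⟩ := hpd
        have hpe : ¬ p ∣ e := fun h => hppd (mul_dvd_mul_left p h)
        have het : e ∣ t := by
          have : e ∣ p ^ (a + 1) * t := (Dvd.intro_left p rfl).trans hdvd
          exact (Nat.Coprime.pow_left _ ((hp.coprime_iff_not_dvd).mpr hpe)).symm.dvd_of_dvd_mul_left this
        exact Finset.mem_union_right _ (Finset.mem_image.mpr ⟨e, Nat.mem_divisors.mpr ⟨het, ht0⟩, rfl⟩)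
      · have hdt : d ∣ t := by
          have : d ∣ p ^ (a + 1) * t := hdvd
          exact (Nat.Coprime.pow_left _ ((hp.coprime_iff_not_dvd).mpr hpd)).symm.dvd_of_dvd_mul_left this
        exact Finset.mem_union_left _ (Nat.mem_divisors.mpr ⟨hdt, ht0⟩)
    have : ¬ Squarefree d := fun hsf => hp.not_isUnit (hsf p hpp)
    rw [moebius_eq_zero_of_not_squarefree this]
    simp
  have hS : mSum x m = ∑ d ∈ A, (μ d : ℤ) * x ^ (m / d) := by
    rw [mSum]
    exact (Finset.sum_subset hsub (fun d hd hdA => hzero d hd hdA)).symm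
  rw [hS, hA, Finset.sum_union hdisj, Finset.sum_image (fun e _ f _ h => by
    exact Nat.eq_of_mul_eq_mul_left hp.pos h)]
  rw [← Finset.sum_add_distrib]
  apply Finset.dvd_sum
  intro e he
  have het : e ∣ t := (Nat.mem_divisors.mp he).1
  have hpe : ¬ p ∣ e := fun h => ht (h.trans het)
  have hμ : (μ (p * e) : ℤ) = -(μ e : ℤ) := by
    rw [isMultiplicative_moebius.map_mul_of_coprime ((hp.coprime_iff_not_dvd).mpr hpe),
      moebius_apply_prime hp]
    ring
  have hme : m / e = p ^ (a + 1) * (t / e) := by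
    rw [hm, Nat.mul_div_assoc _ het]
  have hmpe : m / (p * e) = p ^ a * (t / e) := by
    rw [hm, pow_succ']
    rw [mul_assoc, Nat.mul_div_mul_left _ _ hp.pos, Nat.mul_div_assoc _ het]
  rw [hμ, hme, hmpe]
  have := pow_cong hp a (t / e) x
  have heq : (μ e : ℤ) * x ^ (p ^ (a + 1) * (t / e)) + -(μ e : ℤ) * x ^ (p ^ a * (t / e))
      = (μ e : ℤ) * (x ^ (p ^ (a + 1) * (t / e)) - x ^ (p ^ a * (t / e))) := by ring
  rw [heq]
  exact Dvd.dvd.mul_left this _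

lemma dvd_mSum {m : ℕ} (hm : m ≠ 0) (x : ℤ) : (m : ℤ) ∣ mSum x m := by
  have hfact : ∏ p ∈ m.primeFactors, p ^ m.factorization p = m := by
    conv_rhs => rw [← Nat.factorization_prod_pow_eq_self hm]
    rw [Nat.prod_factorization_eq_prod_primeFactors]
  have hcast : (m : ℤ) = ∏ p ∈ m.primeFactors, (p : ℤ) ^ m.factorization p := by
    conv_lhs => rw [← hfact]
    push_cast; ring
  rw [hcast]
  apply Finset.prod_dvd_of_coprime
  · intro p hp q hq hpq
    have hp' := Nat.prime_of_mem_primeFactors hp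
    have hq' := Nat.prime_of_mem_primeFactors hq
    apply IsCoprime.pow
    rw [Int.isCoprime_iff_gcd_eq_one]
    simpa [Int.gcd_natCast_natCast] using (Nat.coprime_primes hp' hq').mpr hpq
  · intro p hp
    have hp' := Nat.prime_of_mem_primeFactors hp
    have ha : 1 ≤ m.factorization p := (Nat.Prime.factorization_pos_of_dvd hp' hm
      (Nat.dvd_of_mem_primeFactors hp))
    obtain ⟨a, ha'⟩ : ∃ a, m.factorization p = a + 1 := ⟨m.factorization p - 1, by omega⟩
    have hsplit : m = p ^ (a + 1) * (m / p ^ (a + 1)) := by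
      rw [← ha']
      exact (Nat.ordProj_mul_ordCompl_eq_self m p).symm
    have hndvd : ¬ p ∣ m / p ^ (a + 1) := by
      rw [← ha']
      exact Nat.not_dvd_ordCompl hp' hm
    have ht0 : m / p ^ (a + 1) ≠ 0 := by
      rw [← ha']; exact (Nat.ordCompl_pos p hm).ne'
    rw [ha']
    calc (p:ℤ) ^ (a+1) ∣ mSum x (p ^ (a + 1) * (m / p ^ (a + 1))) :=
        prime_pow_dvd_mSum hp' hndvd ht0 x
      _ = mSum x m := by rw [← hsplit]

lemma necklace_mul (n : ℕ) {k : ℕ} (hk : k ≠ 0) : (k : ℤ) * necklace n k = mSum (n : ℤ) k := by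
  rw [necklace, mSum, mul_comm]
  exact Int.ediv_mul_cancel (dvd_mSum hk (n : ℤ))

lemma sum_divisors_necklace (n : ℕ) {m : ℕ} (hm : 0 < m) :
    ∑ d ∈ m.divisors, (d : ℤ) * necklace n d = (n : ℤ) ^ m := by
  revert hm
  revert m
  rw [ArithmeticFunction.sum_eq_iff_sum_mul_moebius_eq
    (f := fun d => (d : ℤ) * necklace n d) (g := fun m => (n : ℤ) ^ m)]
  intro m hm
  rw [necklace_mul n hm.ne', mSum]
  exact Nat.sum_divisorsAntidiagonal (fun a b => (μ a : ℤ) * (n : ℤ) ^ b)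

end NumberTheory

section LogDeriv

noncomputable def lder (u : (PowerSeries ℤ)ˣ) : PowerSeries ℤ :=
  d⁄dX ℤ (u : PowerSeries ℤ) * ((u⁻¹ : (PowerSeries ℤ)ˣ) : PowerSeries ℤ)

lemma lder_mul (u v : (PowerSeries ℤ)ˣ) : lder (u * v) = lder u + lder v := by
  have hu : (u : PowerSeries ℤ) * ↑u⁻¹ = 1 := u.mul_inv
  have hv : (v : PowerSeries ℤ) * ↑v⁻¹ = 1 := v.mul_inv
  unfold lder
  rw [mul_inv_rev, Units.val_mul, Units.val_mul, Derivation.leibniz, smul_eq_mul, smul_eq_mul]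
  linear_combination (d⁄dX ℤ (v : PowerSeries ℤ) * ↑v⁻¹) * hu +
    (d⁄dX ℤ (u : PowerSeries ℤ) * ↑u⁻¹) * hv

lemma lder_one : lder (1 : (PowerSeries ℤ)ˣ) = 0 := by
  unfold lder
  simp

lemma lder_inv (u : (PowerSeries ℤ)ˣ) : lder u⁻¹ = - lder u := by
  have h := lder_mul u u⁻¹
  rw [mul_inv_cancel, lder_one] at h
  exact eq_neg_of_add_eq_zero_right h.symm

lemma lder_pow (u : (PowerSeries ℤ)ˣ) (k : ℕ) : lder (u ^ k) = k • lder u := by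
  induction k with
  | zero => simp [lder_one]
  | succ k ih => rw [pow_succ, lder_mul, ih, succ_nsmul]

lemma lder_zpow (u : (PowerSeries ℤ)ˣ) (z : ℤ) : lder (u ^ z) = z • lder u := by
  obtain ⟨k⟩ | ⟨k⟩ := z
  · rw [Int.ofNat_eq_coe, zpow_natCast, lder_pow, natCast_zsmul]
  · rw [zpow_negSucc, lder_inv, lder_pow, Int.negSucc_eq, neg_smul, ← natCast_zsmul]
    push_cast
    ring_nf

lemma lder_prod {s : Finset ℕ} (u : ℕ → (PowerSeries ℤ)ˣ) :
    lder (∏ k ∈ s, u k) = ∑ k ∈ s, lder (u k) := by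
  induction s using Finset.cons_induction with
  | empty => simp [lder_one]
  | cons a s ha ih => rw [Finset.prod_cons, lder_mul, ih, Finset.sum_cons]

end LogDeriv

section Factors

noncomputable def Sser (k : ℕ) : PowerSeries ℤ :=
  PowerSeries.mk fun m => if (k + 1) ∣ m then 1 else 0

lemma oneSubX_val (k : ℕ) : (oneSubX k : PowerSeries ℤ) = 1 - X ^ (k + 1) :=
  IsUnit.unit_spec _

lemma oneSubX_mul_Sser (k : ℕ) : (1 - X ^ (k + 1) : PowerSeries ℤ) * Sser k = 1 := by
  ext m
  rw [sub_mul, one_mul, map_sub, coeff_X_pow_mul', Sser, coeff_mk]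
  rcases Nat.eq_zero_or_pos m with rfl | hm
  · simp
  · rw [PowerSeries.coeff_one, if_neg hm.ne']
    by_cases h : (k + 1) ∣ m
    · have hle : k + 1 ≤ m := Nat.le_of_dvd hm h
      rw [if_pos h, if_pos hle, coeff_mk, if_pos (Nat.dvd_sub h dvd_rfl)]
      ring
    · rw [if_neg h]
      by_cases hle : k + 1 ≤ m
      · rw [if_pos hle, coeff_mk, if_neg (fun hd => h (by
          have : m = (m - (k + 1)) + (k + 1) := (Nat.sub_add_cancel hle).symm
          rw [this]; exact Nat.dvd_add hd dvd_rfl))]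
        ring
      · rw [if_neg hle]; ring

lemma inv_oneSubX_val (k : ℕ) : (((oneSubX k)⁻¹ : (PowerSeries ℤ)ˣ) : PowerSeries ℤ) = Sser k :=
  Units.inv_eq_of_mul_eq_one_right (by rw [oneSubX_val]; exact oneSubX_mul_Sser k)

lemma coeff_X_pow_mul_Sser (k j : ℕ) :
    (coeff j) (X ^ k * Sser k) = if (k + 1) ∣ (j + 1) then 1 else 0 := by
  rw [coeff_X_pow_mul', Sser]
  by_cases hle : k ≤ j
  · rw [if_pos hle, coeff_mk]
    have hiff : (k + 1) ∣ (j - k) ↔ (k + 1) ∣ (j + 1) := by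
      have h1 : j + 1 = (j - k) + (k + 1) := by omega
      constructor
      · intro hd; rw [h1]; exact Nat.dvd_add hd dvd_rfl
      · intro hd
        have h2 : j - k = (j + 1) - (k + 1) := by omega
        rw [h2]; exact Nat.dvd_sub hd dvd_rfl
    by_cases h : (k + 1) ∣ (j - k)
    · rw [if_pos h, if_pos (hiff.mp h)]
    · rw [if_neg h, if_neg (fun hd => h (hiff.mpr hd))]
  · rw [if_neg hle, if_neg (fun hd => hle (by
      have := Nat.le_of_dvd (Nat.succ_pos j) hd; omega))]

lemma deriv_oneSubX (k : ℕ) :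
    d⁄dX ℤ ((oneSubX k : PowerSeries ℤ)) = -((k + 1 : ℕ) • (X ^ k : PowerSeries ℤ)) := by
  rw [oneSubX_val, map_sub, Derivation.map_one_eq_zero, Derivation.leibniz_pow,
    Nat.add_sub_cancel, derivative_X, smul_eq_mul, mul_one]
  ring

lemma coeff_lder_oneSubX (k j : ℕ) :
    (coeff j) (lder (oneSubX k)) = if (k + 1) ∣ (j + 1) then -((k : ℤ) + 1) else 0 := by
  rw [lder, inv_oneSubX_val, deriv_oneSubX, neg_mul, smul_mul_assoc, map_neg, map_nsmul,
    coeff_X_pow_mul_Sser]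
  by_cases h : (k + 1) ∣ (j + 1)
  · rw [if_pos h, if_pos h]
    ring
  · rw [if_neg h, if_neg h]
    simp

lemma isUnit_f (n : ℕ) : IsUnit (1 - C (n : ℤ) * X) :=
  (PowerSeries.isUnit_iff_constantCoeff (φ := 1 - C (n : ℤ) * X)).mpr (by simp)

noncomputable def Uf (n : ℕ) : (PowerSeries ℤ)ˣ := (isUnit_f n).unit

lemma Uf_val (n : ℕ) : (Uf n : PowerSeries ℤ) = 1 - C (n : ℤ) * X := IsUnit.unit_spec _

noncomputable def Tser (n : ℕ) : PowerSeries ℤ := PowerSeries.mk fun m => (n : ℤ) ^ m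

lemma f_mul_Tser (n : ℕ) : (1 - C (n : ℤ) * X) * Tser n = 1 := by
  ext m
  rw [sub_mul, one_mul, map_sub, mul_assoc]
  rcases m with _ | m
  · simp [Tser]
  · rw [PowerSeries.coeff_one, if_neg (Nat.succ_ne_zero m)]
    rw [PowerSeries.coeff_C_mul, PowerSeries.coeff_succ_X_mul, Tser, coeff_mk, coeff_mk]
    rw [pow_succ]
    ring

lemma inv_Uf_val (n : ℕ) : (((Uf n)⁻¹ : (PowerSeries ℤ)ˣ) : PowerSeries ℤ) = Tser n :=
  Units.inv_eq_of_mul_eq_one_right (by rw [Uf_val]; exact f_mul_Tser n)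

lemma coeff_lder_Uf (n j : ℕ) : (coeff j) (lder (Uf n)) = -(n : ℤ) ^ (j + 1) := by
  have hD : d⁄dX ℤ ((Uf n : PowerSeries ℤ)) = -(C (n : ℤ)) := by
    rw [Uf_val, map_sub, Derivation.map_one_eq_zero, Derivation.leibniz, derivative_X,
      derivative_C, smul_eq_mul, smul_eq_mul, mul_one, mul_zero, add_zero, zero_sub]
  rw [lder, hD, inv_Uf_val, neg_mul, map_neg, PowerSeries.coeff_C_mul, Tser, coeff_mk, pow_succ]
  ring

end Factors

lemma coeff_lder_prodP (n N j : ℕ) (hj : j < N) :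
    (coeff j) (lder (∏ k ∈ range N, oneSubX k ^ necklace n (k + 1))) = -(n : ℤ) ^ (j + 1) := by
  rw [lder_prod, map_sum]
  have hterm : ∀ k ∈ range N, (coeff j) (lder (oneSubX k ^ necklace n (k + 1)))
      = if (k + 1) ∣ (j + 1) then necklace n (k + 1) * -((k : ℤ) + 1) else 0 := by
    intro k _
    rw [lder_zpow, map_zsmul, zsmul_eq_mul, coeff_lder_oneSubX]
    rw [Int.cast_id]
    by_cases h : (k + 1) ∣ (j + 1)
    · rw [if_pos h, if_pos h]
    · rw [if_neg h, if_neg h, mul_zero]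
  rw [Finset.sum_congr rfl hterm, Finset.sum_ite, Finset.sum_const_zero, add_zero]
  have hbij : ∑ k ∈ (range N).filter (fun k => (k + 1) ∣ (j + 1)),
      necklace n (k + 1) * -((k : ℤ) + 1)
      = ∑ d ∈ (j + 1).divisors, necklace n d * -(d : ℤ) := by
    apply Finset.sum_nbij' (i := fun k => k + 1) (j := fun d => d - 1)
    · intro k hk
      obtain ⟨hk1, hk2⟩ := Finset.mem_filter.mp hk
      exact Nat.mem_divisors.mpr ⟨hk2, Nat.succ_ne_zero j⟩
    · intro d hd
      obtain ⟨hd1, _⟩ := Nat.mem_divisors.mp hd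
      have hdpos : 0 < d := Nat.pos_of_dvd_of_pos hd1 (Nat.succ_pos j)
      have hdle : d ≤ j + 1 := Nat.le_of_dvd (Nat.succ_pos j) hd1
      refine Finset.mem_filter.mpr ⟨Finset.mem_range.mpr (by omega), ?_⟩
      rw [Nat.sub_add_cancel hdpos]
      exact hd1
    · intro k _; omega
    · intro d hd
      have hdpos : 0 < d := Nat.pos_of_dvd_of_pos (Nat.mem_divisors.mp hd).1 (Nat.succ_pos j)
      omega
    · intro k _
      push_cast
      ring
  rw [hbij]
  have : ∑ d ∈ (j + 1).divisors, necklace n d * -(d : ℤ)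
      = -∑ d ∈ (j + 1).divisors, (d : ℤ) * necklace n d := by
    rw [← Finset.sum_neg_distrib]
    apply Finset.sum_congr rfl
    intro d _
    ring
  rw [this, sum_divisors_necklace n (Nat.succ_pos j)]

lemma constCoeff_val_inv (u : (PowerSeries ℤ)ˣ) (h : constantCoeff (u : PowerSeries ℤ) = 1) :
    constantCoeff ((u⁻¹ : (PowerSeries ℤ)ˣ) : PowerSeries ℤ) = 1 := by
  have h2 := congrArg (constantCoeff) u.mul_inv
  rw [map_mul, h, one_mul, map_one] at h2
  exact h2

lemma constCoeff_val_zpow (u : (PowerSeries ℤ)ˣ) (h : constantCoeff (u : PowerSeries ℤ) = 1)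
    (z : ℤ) : constantCoeff ((u ^ z : (PowerSeries ℤ)ˣ) : PowerSeries ℤ) = 1 := by
  have hpow : ∀ m : ℕ, constantCoeff ((u ^ m : (PowerSeries ℤ)ˣ) : PowerSeries ℤ) = 1 := by
    intro m
    rw [Units.val_pow_eq_pow_val, map_pow, h, one_pow]
  obtain ⟨k⟩ | ⟨k⟩ := z
  · rw [Int.ofNat_eq_coe, zpow_natCast]
    exact hpow k
  · rw [zpow_negSucc]
    exact constCoeff_val_inv _ (hpow (k + 1))

/-- Witt formula: `1 - n q = ∏_{k=1}^∞ (1 - q^k)^(ℓ_n(k))` in `ℤ⟦q⟧` (q-adically). -/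
theorem witt_formula (n : ℕ) (hn : 1 ≤ n) :
    HasProdExpansion (1 - C (n : ℤ) * X) (fun k => necklace n k) := by
  intro N
  set P : (PowerSeries ℤ)ˣ := ∏ k ∈ range N, oneSubX k ^ necklace n (k + 1) with hP
  set Q : PowerSeries ℤ := (P : PowerSeries ℤ) with hQ
  set f : PowerSeries ℤ := 1 - C (n : ℤ) * X with hf
  have hfU : f = (Uf n : PowerSeries ℤ) := (Uf_val n).symm
  -- constant coefficients
  have hQ0 : constantCoeff Q = 1 := by
    rw [hQ, hP, ← Units.coeHom_apply, map_prod, map_prod]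
    apply Finset.prod_eq_one
    intro k _
    rw [Units.coeHom_apply]
    exact constCoeff_val_zpow _ (by rw [oneSubX_val]; simp) _
  have hf0 : constantCoeff f = 1 := by rw [hf]; simp
  -- the logarithmic derivatives agree up to degree N
  have hL : ∀ j, j < N → (coeff j) (lder (Uf n) - lder P) = 0 := by
    intro j hj
    rw [map_sub, coeff_lder_Uf, hP, coeff_lder_prodP n N j hj, sub_self]
  -- cross-multiplied derivative identity
  have hfac : d⁄dX ℤ f * Q - d⁄dX ℤ Q * f = (lder (Uf n) - lder P) * (f * Q) := by
    have hu : f * (((Uf n)⁻¹ : (PowerSeries ℤ)ˣ) : PowerSeries ℤ) = 1 := by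
      rw [hfU, ← Units.val_mul, mul_inv_cancel, Units.val_one]
    have hq : Q * ((P⁻¹ : (PowerSeries ℤ)ˣ) : PowerSeries ℤ) = 1 := by
      rw [hQ, ← Units.val_mul, mul_inv_cancel, Units.val_one]
    rw [lder, lder, ← hfU, ← hQ]
    linear_combination (-(d⁄dX ℤ f * Q)) * hu + (d⁄dX ℤ Q * f) * hq
  have hkey : ∀ j, j < N →
      (coeff j) (d⁄dX ℤ f * Q) = (coeff j) (d⁄dX ℤ Q * f) := by
    intro j hj
    have h0 : (coeff j) ((lder (Uf n) - lder P) * (f * Q)) = 0 := by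
      rw [PowerSeries.coeff_mul]
      apply Finset.sum_eq_zero
      intro p hp
      have hp1 : p.1 + p.2 = j := Finset.HasAntidiagonal.mem_antidiagonal.mp hp
      rw [hL p.1 (by omega), zero_mul]
    have := congrArg (coeff j) hfac
    rw [map_sub, h0] at this
    linarith
  -- coefficients agree below N
  have main : ∀ i, i < N → (coeff i) f = (coeff i) Q := by
    intro i
    induction i using Nat.strong_induction_on with
    | _ i IH =>
      intro hi
      rcases i with _ | j
      · rw [coeff_zero_eq_constantCoeff_apply, coeff_zero_eq_constantCoeff_apply, hf0, hQ0]
      · have hs := hkey j (by omega)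
        rw [PowerSeries.coeff_mul, PowerSeries.coeff_mul] at hs
        have hsum0 : ∑ p ∈ antidiagonal j,
            ((coeff p.1) (d⁄dX ℤ f) * (coeff p.2) Q
              - (coeff p.1) (d⁄dX ℤ Q) * (coeff p.2) f) = 0 := by
          rw [Finset.sum_sub_distrib, hs, sub_self]
        have hmem : (j, 0) ∈ antidiagonal j := Finset.HasAntidiagonal.mem_antidiagonal.mpr (by omega)
        have hsingle := Finset.sum_eq_single_of_mem (j, 0)
          hmem (f := fun p => (coeff p.1) (d⁄dX ℤ f) * (coeff p.2) Q
            - (coeff p.1) (d⁄dX ℤ Q) * (coeff p.2) f)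
          (by
            intro p hp hne
            have hp1 : p.1 + p.2 = j := Finset.HasAntidiagonal.mem_antidiagonal.mp hp
            have hlt : p.1 < j := by
              rcases Nat.lt_or_ge p.1 j with h | h
              · exact h
              · exfalso; apply hne
                have : p.1 = j := by omega
                have : p.2 = 0 := by omega
                exact Prod.ext (by omega) this
            have h1 : (coeff (p.1 + 1)) f = (coeff (p.1 + 1)) Q :=
              IH (p.1 + 1) (by omega) (by omega)
            have h2 : (coeff p.2) f = (coeff p.2) Q :=
              IH p.2 (by omega) (by omega)
            rw [PowerSeries.coeff_derivative, PowerSeries.coeff_derivative, h1, h2]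
            ring)
        rw [hsum0] at hsingle
        have hz : (coeff j) (d⁄dX ℤ f) * (coeff 0) Q
            - (coeff j) (d⁄dX ℤ Q) * (coeff 0) f = 0 := hsingle.symm
        rw [coeff_zero_eq_constantCoeff_apply, coeff_zero_eq_constantCoeff_apply, hf0, hQ0,
          PowerSeries.coeff_derivative, PowerSeries.coeff_derivative] at hz
        have hj1 : ((j : ℤ) + 1) ≠ 0 := by positivity
        have : ((coeff (j + 1)) f - (coeff (j + 1)) Q) * ((j : ℤ) + 1) = 0 := by
          push_cast at hz ⊢
          linarith
        rcases mul_eq_zero.mp this with h | h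
        · linarith [sub_eq_zero.mp h]
        · exact absurd h hj1
  -- conclude
  ext m
  rw [coeff_trunc, coeff_trunc]
  by_cases hm : m < N
  · rw [if_pos hm, if_pos hm, main m hm]
  · rw [if_neg hm, if_neg hm]
end

section
/- Let f ∈ ℤ[[q]] with constant term 1 and suppose all coefficients of -log f(q) (as a series ∑ (b_n/n) q^n in ℚ[[q]]) satisfy b_n ∈ ℤ. Then the exponents i_k in the product expansion f = ∏(1-q^k)^{i_k} are given by i_k = (1/k)∑_{d|k} μ(d) b_{k/d}, and this is an integer. -/
open PowerSeries Finset

/-- `log f = -∑_{n≥1} (b n / n) q^n` in `ℚ⟦q⟧`, encoded via formal differentiation: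
since the formal logarithm of `f` (with `f(0) = 1`) is the unique series `g` with
`g(0) = 0` and `f * g′ = f′`, the statement `log f = -∑ (b n / n) q^n` is equivalent to
`f′ = f * (-∑_{n≥1} b n * q^(n-1))`. -/
def LogEq (f : PowerSeries ℤ) (b : ℕ → ℚ) : Prop :=
  (PowerSeries.map (Int.castRingHom ℚ) f).derivativeFun =
    PowerSeries.map (Int.castRingHom ℚ) f * (-(PowerSeries.mk fun m => b (m + 1)))

noncomputable section

def Sgeo (k : ℕ) : PowerSeries ℚ := PowerSeries.mk fun n => if (k+1) ∣ n then 1 else 0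

lemma Sgeo_eq (k : ℕ) : Sgeo k = 1 + X ^ (k+1) * Sgeo k := by
  ext n
  rw [map_add, PowerSeries.coeff_X_pow_mul']
  simp only [Sgeo, coeff_mk, coeff_one]
  rcases n with _ | m
  · simp
  · rw [show (if m + 1 = 0 then (1:ℚ) else 0) = 0 from if_neg (by omega), zero_add]
    by_cases hle : k + 1 ≤ m + 1
    · rw [if_pos hle]
      have hiff : (k + 1) ∣ (m + 1) ↔ (k + 1) ∣ (m + 1 - (k + 1)) := by
        constructor
        · intro h; exact (Nat.dvd_sub h dvd_rfl)
        · intro h; have := Nat.dvd_add h (dvd_refl (k+1)); rwa [Nat.sub_add_cancel hle] at this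
      rw [if_congr hiff rfl rfl]
    · rw [if_neg hle, if_neg (by intro h; exact hle (Nat.le_of_dvd (by omega) h))]

lemma oneSub_mul_Sgeo (k : ℕ) : (1 - X ^ (k+1)) * Sgeo k = 1 := by
  rw [sub_mul, one_mul]
  nth_rewrite 1 [Sgeo_eq k]
  ring

def uQ (k : ℕ) : (PowerSeries ℚ)ˣ :=
  Units.map (PowerSeries.map (Int.castRingHom ℚ)).toMonoidHom (oneSubX k)

lemma oneSubX_coe (k : ℕ) : ((oneSubX k : (PowerSeries ℤ)ˣ) : PowerSeries ℤ) = 1 - X ^ (k+1) :=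
  IsUnit.unit_spec _

lemma uQ_coe (k : ℕ) : ((uQ k : (PowerSeries ℚ)ˣ) : PowerSeries ℚ) = 1 - X ^ (k+1) := by
  show PowerSeries.map (Int.castRingHom ℚ) ((oneSubX k : (PowerSeries ℤ)ˣ) : PowerSeries ℤ) = _
  rw [oneSubX_coe, map_sub, map_one, map_pow, PowerSeries.map_X]

lemma uQ_inv_coe (k : ℕ) : (((uQ k)⁻¹ : (PowerSeries ℚ)ˣ) : PowerSeries ℚ) = Sgeo k := by
  have h : ((uQ k : (PowerSeries ℚ)ˣ) : PowerSeries ℚ) * Sgeo k = 1 := by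
    rw [uQ_coe]; exact oneSub_mul_Sgeo k
  calc (((uQ k)⁻¹ : (PowerSeries ℚ)ˣ) : PowerSeries ℚ)
      = ↑(uQ k)⁻¹ * (↑(uQ k) * Sgeo k) := by rw [h, mul_one]
    _ = (↑(uQ k)⁻¹ * ↑(uQ k)) * Sgeo k := by ring
    _ = Sgeo k := by rw [Units.inv_mul, one_mul]

/-- Logarithmic derivative of a unit. -/
def LD (u : (PowerSeries ℚ)ˣ) : PowerSeries ℚ :=
  ((u⁻¹ : (PowerSeries ℚ)ˣ) : PowerSeries ℚ) * derivativeFun (u : PowerSeries ℚ)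

lemma dEq (f : PowerSeries ℚ) : d⁄dX ℚ f = derivativeFun f := rfl

lemma derivativeFun_unit_pow (u : (PowerSeries ℚ)ˣ) (n : ℕ) :
    derivativeFun ((u ^ n : (PowerSeries ℚ)ˣ) : PowerSeries ℚ) =
      C (n : ℚ) * (((u ^ n : (PowerSeries ℚ)ˣ) : PowerSeries ℚ) * LD u) := by
  induction n with
  | zero => simp [derivativeFun_one]
  | succ m ih =>
    have h1 : ((u ^ (m+1) : (PowerSeries ℚ)ˣ) : PowerSeries ℚ)
        = ((u ^ m : (PowerSeries ℚ)ˣ) : PowerSeries ℚ) * (u : PowerSeries ℚ) := by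
      rw [pow_succ]; exact Units.val_mul _ _
    have hu : ((u ^ m : (PowerSeries ℚ)ˣ) : PowerSeries ℚ) * derivativeFun (u : PowerSeries ℚ)
        = ((u ^ m : (PowerSeries ℚ)ˣ) : PowerSeries ℚ) * ((u : PowerSeries ℚ) * LD u) := by
      rw [LD, ← mul_assoc ((u : PowerSeries ℚ)), Units.mul_inv, one_mul]
    rw [h1, derivativeFun_mul, smul_eq_mul, smul_eq_mul, ih, hu,
      show ((m+1 : ℕ) : ℚ) = (m : ℚ) + 1 by push_cast; ring, map_add, map_one]
    ring

lemma derivativeFun_unit_inv (u : (PowerSeries ℚ)ˣ) :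
    derivativeFun ((u⁻¹ : (PowerSeries ℚ)ˣ) : PowerSeries ℚ) =
      -(((u⁻¹ : (PowerSeries ℚ)ˣ) : PowerSeries ℚ) * LD u) := by
  rw [← dEq, PowerSeries.derivative_inv, dEq, LD]
  ring

lemma derivativeFun_unit_zpow (u : (PowerSeries ℚ)ˣ) (z : ℤ) :
    derivativeFun ((u ^ z : (PowerSeries ℚ)ˣ) : PowerSeries ℚ) =
      C (z : ℚ) * (((u ^ z : (PowerSeries ℚ)ˣ) : PowerSeries ℚ) * LD u) := by
  rcases z with n | n
  · simpa using derivativeFun_unit_pow u n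
  · have h1 : u ^ (Int.negSucc n) = (u⁻¹) ^ (n+1) := by
      rw [zpow_negSucc, ← inv_pow]
    have h2 : LD (u⁻¹) = - LD u := by
      have h3 : ((u : PowerSeries ℚ)) * ((u⁻¹ : (PowerSeries ℚ)ˣ) : PowerSeries ℚ) = 1 :=
        u.mul_inv
      rw [LD, inv_inv, derivativeFun_unit_inv, mul_neg, ← mul_assoc, h3, one_mul]
    rw [h1, derivativeFun_unit_pow, h2]
    have : ((Int.negSucc n : ℤ) : ℚ) = -((n+1 : ℕ) : ℚ) := by
      rw [Int.cast_negSucc]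
    rw [this, map_neg]
    ring

lemma derivativeFun_unit_prod (s : Finset ℕ) (w : ℕ → (PowerSeries ℚ)ˣ) :
    derivativeFun ((∏ k ∈ s, w k : (PowerSeries ℚ)ˣ) : PowerSeries ℚ) =
      ((∏ k ∈ s, w k : (PowerSeries ℚ)ˣ) : PowerSeries ℚ) * ∑ k ∈ s, LD (w k) := by
  induction s using Finset.induction with
  | empty => simp [derivativeFun_one]
  | @insert a s hx ih =>
    have h3 : ((w a : PowerSeries ℚ)) * ((w a)⁻¹ : (PowerSeries ℚ)ˣ) = 1 := (w a).mul_inv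
    rw [Finset.prod_insert hx, Finset.sum_insert hx, Units.val_mul, derivativeFun_mul,
      smul_eq_mul, smul_eq_mul, ih, LD]
    linear_combination (-(((∏ k ∈ s, w k : (PowerSeries ℚ)ˣ) : PowerSeries ℚ) *
      derivativeFun ((w a : PowerSeries ℚ)))) * h3

lemma LD_uQ (k : ℕ) : LD (uQ k) = C (-((k:ℚ)+1)) * (X ^ k * Sgeo k) := by
  have hd : derivativeFun ((1:PowerSeries ℚ) - X^(k+1)) = - (C ((k:ℚ)+1) * X^k) := by
    show d⁄dX ℚ _ = _
    rw [map_sub]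
    simp only [Derivation.map_one_eq_zero, Derivation.leibniz_pow, PowerSeries.derivative_X,
      smul_eq_mul, mul_one, zero_sub, Nat.add_sub_cancel]
    rw [nsmul_eq_mul, show ((k+1 : ℕ) : PowerSeries ℚ) = C ((k:ℚ)+1) by push_cast; simp]
  rw [LD, uQ_inv_coe, uQ_coe, hd, map_neg]
  ring

lemma coeff_X_pow_mul_Sgeo (k n : ℕ) :
    coeff n (X ^ k * Sgeo k) = if (k+1) ∣ (n+1) then 1 else 0 := by
  rw [PowerSeries.coeff_X_pow_mul']
  by_cases h : k ≤ n
  · rw [if_pos h]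
    simp only [Sgeo, coeff_mk]
    have heq : n + 1 = (n - k) + (k + 1) := by omega
    have hiff : (k + 1) ∣ (n - k) ↔ (k + 1) ∣ (n + 1) := by
      constructor
      · intro hd; rw [heq]; exact Nat.dvd_add hd dvd_rfl
      · intro hd; rw [heq] at hd
        have := Nat.dvd_sub hd (dvd_refl (k+1)); simpa using this
    rw [if_congr hiff rfl rfl]
  · rw [if_neg h, if_neg fun hd => h (by have := Nat.le_of_dvd (by omega) hd; omega)]

def hser (i : ℕ → ℤ) (N : ℕ) : PowerSeries ℚ :=
  ∑ k ∈ range N, C ((i (k+1) : ℚ)) * LD (uQ k)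

lemma coeff_hser (i : ℕ → ℤ) (n N : ℕ) (h : n < N) :
    coeff n (hser i N) = -∑ d ∈ (n+1).divisors, (d : ℚ) * (i d : ℚ) := by
  rw [hser, map_sum]
  have step : ∀ k ∈ range N, coeff n (C ((i (k+1) : ℚ)) * LD (uQ k)) =
      if (k+1) ∣ (n+1) then -(((k:ℚ)+1) * (i (k+1) : ℚ)) else 0 := by
    intro k _
    rw [LD_uQ, ← mul_assoc, ← map_mul, PowerSeries.coeff_C_mul, coeff_X_pow_mul_Sgeo]
    split_ifs <;> ring
  rw [Finset.sum_congr rfl step, Finset.sum_ite, Finset.sum_const_zero, add_zero,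
    show -∑ d ∈ (n+1).divisors, (d : ℚ) * (i d : ℚ)
      = ∑ d ∈ (n+1).divisors, -((d : ℚ) * (i d : ℚ)) by rw [← Finset.sum_neg_distrib]]
  refine Finset.sum_nbij' (i := fun k => k + 1) (j := fun d => d - 1) ?_ ?_ ?_ ?_ ?_
  · intro a ha
    simp only [Finset.mem_filter, Finset.mem_range] at ha
    exact Nat.mem_divisors.mpr ⟨ha.2, by omega⟩
  · intro a ha
    rw [Nat.mem_divisors] at ha
    have h1 : 1 ≤ a := Nat.pos_of_dvd_of_pos ha.1 (by omega)
    have h2 : a ≤ n + 1 := Nat.le_of_dvd (by omega) ha.1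
    simp only [Finset.mem_filter, Finset.mem_range]
    constructor
    · omega
    · rw [Nat.sub_add_cancel h1]; exact ha.1
  · intro a _; rfl
  · intro a ha
    rw [Nat.mem_divisors] at ha
    have h1 : 1 ≤ a := Nat.pos_of_dvd_of_pos ha.1 (by omega)
    exact Nat.succ_pred_eq_of_pos h1
  · intro a ha
    simp only [Finset.mem_filter, Finset.mem_range] at ha
    push_cast
    ring

lemma LD_zpow (u : (PowerSeries ℚ)ˣ) (z : ℤ) : LD (u ^ z) = C (z : ℚ) * LD u := by
  have h3 : (((u ^ z)⁻¹ : (PowerSeries ℚ)ˣ) : PowerSeries ℚ) * ((u ^ z : (PowerSeries ℚ)ˣ) : PowerSeries ℚ) = 1 := (u ^ z).inv_mul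
  rw [LD, derivativeFun_unit_zpow]
  linear_combination (C (z:ℚ) * LD u) * h3

/-- The `N`-th partial product over ℚ. -/
def Qprod (i : ℕ → ℤ) (N : ℕ) : PowerSeries ℚ :=
  ((∏ k ∈ range N, uQ k ^ i (k + 1) : (PowerSeries ℚ)ˣ) : PowerSeries ℚ)

lemma map_prodExp (i : ℕ → ℤ) (N : ℕ) :
    PowerSeries.map (Int.castRingHom ℚ)
      ((∏ k ∈ range N, oneSubX k ^ i (k + 1) : (PowerSeries ℤ)ˣ) : PowerSeries ℤ)
      = Qprod i N := by
  have : Units.map (PowerSeries.map (Int.castRingHom ℚ)).toMonoidHom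
      (∏ k ∈ range N, oneSubX k ^ i (k + 1)) = ∏ k ∈ range N, uQ k ^ i (k + 1) := by
    rw [map_prod]
    exact Finset.prod_congr rfl fun k _ => map_zpow _ _ _
  calc PowerSeries.map (Int.castRingHom ℚ) ((∏ k ∈ range N, oneSubX k ^ i (k + 1) : (PowerSeries ℤ)ˣ) : PowerSeries ℤ)
      = ((Units.map (PowerSeries.map (Int.castRingHom ℚ)).toMonoidHom
        (∏ k ∈ range N, oneSubX k ^ i (k + 1)) : (PowerSeries ℚ)ˣ) : PowerSeries ℚ) := rfl
    _ = Qprod i N := by rw [this]; rfl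

lemma coeff_f_eq {f : PowerSeries ℤ} {i : ℕ → ℤ} (hi : HasProdExpansion f i)
    {m N : ℕ} (h : m < N) :
    coeff m (PowerSeries.map (Int.castRingHom ℚ) f) = coeff m (Qprod i N) := by
  have := congrArg (fun p => Polynomial.coeff p m) (hi N)
  simp only [coeff_trunc, if_pos h] at this
  rw [PowerSeries.coeff_map, ← map_prodExp i N, PowerSeries.coeff_map, this]

lemma deriv_Qprod (i : ℕ → ℤ) (N : ℕ) :
    derivativeFun (Qprod i N) = Qprod i N * hser i N := by
  rw [Qprod, derivativeFun_unit_prod, hser]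
  congr 1
  exact Finset.sum_congr rfl fun k _ => LD_zpow (uQ k) (i (k+1))

lemma key_identity (f : PowerSeries ℤ) (hf : constantCoeff f = 1)
    (i : ℕ → ℤ) (hi : HasProdExpansion f i) (b : ℕ → ℤ)
    (hb : LogEq f (fun n => (b n : ℚ))) (n : ℕ) (hn : 1 ≤ n) :
    b n = ∑ d ∈ n.divisors, (d : ℤ) * i d := by
  set fQ := PowerSeries.map (Int.castRingHom ℚ) f with hfQ
  set g2 : PowerSeries ℚ := PowerSeries.mk fun m => ∑ d ∈ (m+1).divisors, (d : ℚ) * (i d : ℚ)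
  have main : derivativeFun fQ = fQ * (-g2) := by
    ext n
    have e1 : coeff n (derivativeFun fQ) = coeff n (derivativeFun (Qprod i (n+2))) := by
      rw [← dEq, ← dEq, coeff_derivative, coeff_derivative, coeff_f_eq hi (m := n+1) (N := n+2) (by omega)]
    have e2 : coeff n (Qprod i (n+2) * hser i (n+2)) = coeff n (fQ * (-g2)) := by
      rw [PowerSeries.coeff_mul, PowerSeries.coeff_mul]
      apply Finset.sum_congr rfl
      intro p hp
      have hpn := Finset.HasAntidiagonal.mem_antidiagonal.mp hp
      have c1 : coeff p.1 (Qprod i (n+2)) = coeff p.1 fQ :=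
        (coeff_f_eq hi (by omega)).symm
      have c2 : coeff p.2 (hser i (n+2)) = coeff p.2 (-g2) := by
        rw [coeff_hser i p.2 (n+2) (by omega), map_neg, coeff_mk]
      rw [c1, c2]
    rw [e1, deriv_Qprod, e2]
  have hb' : derivativeFun fQ = fQ * (-(PowerSeries.mk fun m => ((b (m+1) : ℤ) : ℚ))) := hb
  have hfQ0 : fQ ≠ 0 := by
    intro h0
    have : constantCoeff fQ = 1 := by
      rw [hfQ, ← coeff_zero_eq_constantCoeff, PowerSeries.coeff_map,
        coeff_zero_eq_constantCoeff, hf]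
      simp
    rw [h0, map_zero] at this
    exact one_ne_zero this.symm
  have hg : (-(PowerSeries.mk fun m => ((b (m+1) : ℤ) : ℚ))) = -g2 :=
    mul_left_cancel₀ hfQ0 (hb'.symm.trans main)
  have hco := congrArg (fun p => coeff (n-1) p) hg
  simp only [map_neg, coeff_mk, neg_inj] at hco
  have hn1 : n - 1 + 1 = n := by omega
  rw [hn1, show g2 = PowerSeries.mk fun m => ∑ d ∈ (m+1).divisors, (d : ℚ) * (i d : ℚ) from rfl,
    coeff_mk, hn1] at hco
  exact_mod_cast hco


end

/-- If all the coefficients `b n` (with `log f = -∑ (b n / n) q^n`) are integers, then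
`i k = (1/k) ∑_{d ∣ k} μ(d) b (k/d)`, and this is an integer, i.e. the sum is
divisible by `k`. -/
theorem exponent_formula_int (f : PowerSeries ℤ) (hf : constantCoeff f = 1)
    (i : ℕ → ℤ) (hi : HasProdExpansion f i) (b : ℕ → ℤ)
    (hb : LogEq f (fun n => (b n : ℚ))) :
    ∀ k : ℕ, 1 ≤ k →
      (k : ℤ) ∣ (∑ d ∈ Nat.divisors k, (ArithmeticFunction.moebius d : ℤ) * b (k / d)) ∧
      i k = (∑ d ∈ Nat.divisors k, (ArithmeticFunction.moebius d : ℤ) * b (k / d)) / k := by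
  have hkey : ∀ n : ℕ, n > 0 → ∑ d ∈ n.divisors, (d : ℤ) * i d = b n := by
    intro n hn
    exact (key_identity f hf i hi b hb n hn).symm
  have hinv := (ArithmeticFunction.sum_eq_iff_sum_mul_moebius_eq
    (f := fun d => (d : ℤ) * i d) (g := b)).mp hkey
  intro k hk
  have h1 := hinv k (by omega)
  have h2 : ∑ x ∈ k.divisorsAntidiagonal, ((ArithmeticFunction.moebius x.1 : ℤ) * b x.2)
      = ∑ d ∈ k.divisors, (ArithmeticFunction.moebius d : ℤ) * b (k / d) :=
    Nat.sum_divisorsAntidiagonal fun x y => ((ArithmeticFunction.moebius x : ℤ) * b y)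
  simp only [Int.cast_id] at h1
  rw [h2] at h1
  rw [h1]
  refine ⟨Dvd.intro _ rfl, ?_⟩
  rw [Int.mul_ediv_cancel_left _ (show (k : ℤ) ≠ 0 by positivity)]
end
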